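/- arXiv:2006.08189 — 2 statements merged into one kernel-verified Lean document; each statement's English description precedes it below -/
import Mathlib

section
/- Let n ≥ 2, δ ∈ (0,1), let α_1,…,α_n be i.i.d. uniform on [δ,1], and let π(i) = α_i/(α_1+⋯+α_n). Then for every t > 0 and every ν in the probability simplex S_n: P( ‖π − ν‖_∞ ≤ t·‖π‖_∞ ) ≤ (2/(δ(1−δ)))^n · t^{n−1}. Consequently, the small ball probability ℒ_∞(t) = sup_{ν ∈ S_n} P(‖π − ν‖_∞/‖π‖_∞ ≤ t) satisfies ℒ_∞(t) ≤ (2/(δ(1−δ)))^n · t^{n−1}. -/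
open MeasureTheory ProbabilityTheory

/-- ℓ^∞ norm of a vector. -/
noncomputable def linfty {n : ℕ} (v : Fin n → ℝ) : ℝ := ⨆ i, |v i|

/-- Canonically scaled skill parameters `π(i) = α_i / (α_1 + ⋯ + α_n)`. -/
noncomputable def piVec {n : ℕ} (β : Fin n → ℝ) : Fin n → ℝ := fun i => β i / ∑ j, β j

private lemma aux_ndelta {δ : ℝ} (h0 : 0 ≤ δ) (h1 : δ ≤ 1) :
    ∀ m : ℕ, (m : ℝ) * δ ^ m * (1 - δ) ≤ 1 := by
  intro m
  induction m with
  | zero => simp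
  | succ m ih =>
    have hδm : δ ^ (m + 1) ≤ 1 := pow_le_one₀ h0 h1
    have hδm' : (0:ℝ) ≤ δ ^ m := pow_nonneg h0 m
    have h2 : ((m:ℝ) + 1) * δ ^ (m + 1) * (1 - δ)
        = δ * ((m : ℝ) * δ ^ m * (1 - δ)) + δ ^ (m + 1) * (1 - δ) := by
      ring
    push_cast
    rw [h2]
    nlinarith

private lemma linfty_nonneg {n : ℕ} (v : Fin n → ℝ) : 0 ≤ linfty v :=
  Real.iSup_nonneg fun _ => abs_nonneg _

private lemma abs_le_linfty {n : ℕ} (v : Fin n → ℝ) (i : Fin n) : |v i| ≤ linfty v := by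
  exact le_ciSup (f := fun i => |v i|) (Set.Finite.bddAbove (Set.finite_range _)) i

private lemma core_bound {n : ℕ} (hn : 2 ≤ n) {δ : ℝ} (hδ0 : 0 < δ) (hδ1 : δ < 1)
    {Ω : Type} [MeasurableSpace Ω] (P : Measure Ω) [IsProbabilityMeasure P]
    (α : Fin n → Ω → ℝ) (hmeas : ∀ i, Measurable (α i))
    (hindep : iIndepFun (m := fun _ => Real.measurableSpace) α P)
    (hunif : ∀ i, Measure.map (α i) P =
      ENNReal.ofReal ((1 - δ)⁻¹) • volume.restrict (Set.Icc δ 1))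
    {t : ℝ} (ht : 0 < t) {ν : Fin n → ℝ} (hν : ν ∈ stdSimplex ℝ (Fin n)) :
    P {ω | linfty (fun i => piVec (fun j => α j ω) i - ν i)
            ≤ t * linfty (piVec fun j => α j ω)}
      ≤ ENNReal.ofReal ((2 / (δ * (1 - δ))) ^ n * t ^ (n - 1)) := by
  obtain ⟨hν0, hν1⟩ := hν
  have h1δ : (0:ℝ) < 1 - δ := by linarith
  have hn1 : (1:ℝ) ≤ (n : ℝ) := by exact_mod_cast (by omega : 1 ≤ n)
  haveI : NeZero n := ⟨by omega⟩
  -- pick the index with maximal ν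
  obtain ⟨k, hk⟩ := Finite.exists_max ν
  have hνk : 1 ≤ (n : ℝ) * ν k := by
    calc (1:ℝ) = ∑ i, ν i := hν1.symm
    _ ≤ ∑ _i : Fin n, ν k := Finset.sum_le_sum fun i _ => hk i
    _ = (n : ℝ) * ν k := by
        rw [Finset.sum_const, Finset.card_univ, Fintype.card_fin, nsmul_eq_mul]
  have hνkpos : 0 < ν k := by nlinarith
  -- the joint law is the product measure
  set c : ENNReal := ENNReal.ofReal ((1 - δ)⁻¹) with hc
  set μ0 : Measure ℝ := c • volume.restrict (Set.Icc δ 1) with hμ0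
  haveI : IsFiniteMeasure μ0 := by
    constructor
    rw [hμ0, Measure.smul_apply, smul_eq_mul, Measure.restrict_apply MeasurableSet.univ,
      Set.univ_inter, Real.volume_Icc]
    exact ENNReal.mul_lt_top ENNReal.ofReal_lt_top ENNReal.ofReal_lt_top
  have hjm : Measurable (fun ω (i : Fin n) => α i ω) := measurable_pi_lambda _ hmeas
  have hmap : Measure.map (fun ω (i : Fin n) => α i ω) P = Measure.pi (fun _ : Fin n => μ0) := by
    refine (Measure.pi_eq fun s hs => ?_).symm
    rw [Measure.map_apply hjm (MeasurableSet.univ_pi hs)]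
    have hpre : (fun ω (i : Fin n) => α i ω) ⁻¹' Set.pi Set.univ s = ⋂ i ∈ Finset.univ,
        α i ⁻¹' s i := by
      ext ω; simp [Set.mem_pi]
    rw [hpre, hindep.measure_inter_preimage_eq_mul Finset.univ (fun i _ => hs i)]
    refine Finset.prod_congr rfl fun i _ => ?_
    rw [← Measure.map_apply (hmeas i) (hs i), hunif i, hμ0]
  -- the product measure is a scaled restricted Lebesgue measure
  set box : Set (Fin n → ℝ) := Set.pi Set.univ (fun _ => Set.Icc δ 1) with hbox
  have hboxm : MeasurableSet box := MeasurableSet.univ_pi fun _ => measurableSet_Icc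
  have hpi : Measure.pi (fun _ : Fin n => μ0) = c ^ n • volume.restrict box := by
    refine Measure.pi_eq fun s hs => ?_
    rw [Measure.smul_apply, smul_eq_mul, Measure.restrict_apply' hboxm, hbox,
      ← Set.pi_inter_distrib, volume_pi_pi]
    simp only [hμ0, Measure.smul_apply, smul_eq_mul]
    rw [Finset.prod_mul_distrib, Finset.prod_const, Finset.card_univ, Fintype.card_fin]
    congr 1
    refine Finset.prod_congr rfl fun i _ => ?_
    rw [Measure.restrict_apply (hs i)]
  -- the event as a set in ℝ^n
  set A : Set (Fin n → ℝ) :=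
    {v | linfty (fun i => piVec v i - ν i) ≤ t * linfty (piVec v)} with hA
  have step1 : P {ω | linfty (fun i => piVec (fun j => α j ω) i - ν i)
      ≤ t * linfty (piVec fun j => α j ω)} ≤ Measure.pi (fun _ : Fin n => μ0) A := by
    rw [← hmap]
    exact Measure.le_map_apply hjm.aemeasurable A
  -- the linear change of variables
  set u : Fin n → ℝ := fun i => if i = k then 0 else ν i with hu
  have husum : ∑ i, u i = 1 - ν k := by
    have h : ∀ i, u i = ν i - (if i = k then ν k else 0) := by
      intro i; by_cases h : i = k <;> simp [hu, h]
    simp only [h, Finset.sum_sub_distrib, hν1, Finset.sum_ite_eq' Finset.univ k,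
      Finset.mem_univ, if_true]
  set M : Matrix (Fin n) (Fin n) ℝ :=
    Matrix.of (fun i j => (if i = j then (1:ℝ) else 0) - u i) with hM
  have hMdet : M.det = ν k := by
    have h1 : M = 1 + Matrix.replicateCol Unit (-u) * Matrix.replicateRow Unit (fun _ => (1:ℝ)) := by
      ext i j
      simp [hM, Matrix.mul_apply, Matrix.one_apply, sub_eq_add_neg]
    rw [h1, Matrix.det_one_add_replicateCol_mul_replicateRow]
    simp [dotProduct, husum]
  set T : (Fin n → ℝ) →ₗ[ℝ] (Fin n → ℝ) := Matrix.toLin' M with hT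
  have hTdet : LinearMap.det T = ν k := by rw [hT, LinearMap.det_toLin', hMdet]
  have hTdet0 : LinearMap.det T ≠ 0 := by rw [hTdet]; exact hνkpos.ne'
  have hTapp : ∀ v : Fin n → ℝ, ∀ i, T v i = v i - u i * ∑ j, v j := by
    intro v i
    rw [hT]
    simp only [Matrix.toLin'_apply, Matrix.mulVec, dotProduct, hM, Matrix.of_apply,
      sub_mul, Finset.sum_sub_distrib, ite_mul, one_mul, zero_mul, Finset.sum_ite_eq,
      Finset.mem_univ, if_true, ← Finset.mul_sum]
  set B : Set (Fin n → ℝ) :=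
    Set.pi Set.univ (fun i => if i = k then Set.Icc δ 1 else Set.Icc (-t) t) with hB
  -- the event is contained in the preimage of a box
  have hsub : A ∩ box ⊆ T ⁻¹' B := by
    rintro v ⟨hvA, hvbox⟩
    have hv : ∀ i, v i ∈ Set.Icc δ 1 := fun i => hvbox i (Set.mem_univ i)
    have hSpos : 0 < ∑ j, v j := by
      have h0 : (0:ℝ) < ∑ _j : Fin n, δ := by
        rw [Finset.sum_const, Finset.card_univ, Fintype.card_fin, nsmul_eq_mul]
        positivity
      exact lt_of_lt_of_le h0 (Finset.sum_le_sum fun j _ => (hv j).1)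
    have hπle : linfty (piVec v) ≤ 1 / ∑ j, v j := by
      apply ciSup_le
      intro i
      simp only [piVec]
      rw [abs_of_nonneg (div_nonneg (le_trans hδ0.le (hv i).1) hSpos.le)]
      exact (div_le_div_iff_of_pos_right hSpos).mpr (hv i).2
    have hvA' : linfty (fun i => piVec v i - ν i) ≤ t * linfty (piVec v) := hvA
    have hkey : ∀ i, |v i - ν i * ∑ j, v j| ≤ t := by
      intro i
      have h1 : |piVec v i - ν i| ≤ t * (1 / ∑ j, v j) := by
        refine le_trans (abs_le_linfty (fun i => piVec v i - ν i) i) (le_trans hvA' ?_)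
        exact mul_le_mul_of_nonneg_left hπle ht.le
      have h2 : v i - ν i * ∑ j, v j = (∑ j, v j) * (piVec v i - ν i) := by
        simp only [piVec]; field_simp
      rw [h2, abs_mul, abs_of_pos hSpos]
      calc (∑ j, v j) * |piVec v i - ν i| ≤ (∑ j, v j) * (t * (1 / ∑ j, v j)) :=
            mul_le_mul_of_nonneg_left h1 hSpos.le
      _ = t := by field_simp
    rw [Set.mem_preimage, hB, Set.mem_univ_pi]
    intro i
    by_cases hik : i = k
    · subst hik
      have hTv : T v i = v i := by rw [hTapp v i]; simp [hu]
      rw [if_pos rfl, hTv]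
      exact hv i
    · have hTv : T v i = v i - ν i * ∑ j, v j := by rw [hTapp v i]; simp [hu, hik]
      rw [if_neg hik, hTv, Set.mem_Icc]
      exact abs_le.mp (hkey i)
  -- volume of the box B
  have hvolB : volume B = ENNReal.ofReal (1 - δ) * ENNReal.ofReal (2 * t) ^ (n - 1) := by
    rw [hB, volume_pi_pi]
    have hval : ∀ i : Fin n, volume (if i = k then Set.Icc δ 1 else Set.Icc (-t) t)
        = if i = k then ENNReal.ofReal (1 - δ) else ENNReal.ofReal (2 * t) := by
      intro i
      by_cases h : i = k
      · rw [if_pos h, if_pos h, Real.volume_Icc]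
      · rw [if_neg h, if_neg h, Real.volume_Icc]
        congr 1; ring
    simp only [hval]
    rw [← Finset.mul_prod_erase Finset.univ _ (Finset.mem_univ k), if_pos rfl]
    congr 1
    rw [Finset.prod_congr rfl (fun i hi => if_neg (Finset.ne_of_mem_erase hi)),
      Finset.prod_const, Finset.card_erase_of_mem (Finset.mem_univ k), Finset.card_univ,
      Fintype.card_fin]
  have hpre : volume (T ⁻¹' B) = ENNReal.ofReal |(LinearMap.det T)⁻¹| * volume B :=
    Measure.addHaar_preimage_linearMap volume hTdet0 B
  -- the real-number inequality
  have hkeyr : (ν k)⁻¹ * (1 - δ) * δ ^ n ≤ 2 := by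
    have hinv : (ν k)⁻¹ ≤ (n : ℝ) := by
      rw [inv_eq_one_div, div_le_iff₀ hνkpos]; linarith
    have hδn : (0:ℝ) ≤ δ ^ n := pow_nonneg hδ0.le n
    have h3 : (ν k)⁻¹ * (1 - δ) * δ ^ n ≤ (n:ℝ) * δ ^ n * (1 - δ) := by
      have hnn : (0:ℝ) ≤ (1 - δ) * δ ^ n := mul_nonneg h1δ.le hδn
      calc (ν k)⁻¹ * (1 - δ) * δ ^ n = (ν k)⁻¹ * ((1 - δ) * δ ^ n) := by ring
      _ ≤ (n:ℝ) * ((1 - δ) * δ ^ n) := mul_le_mul_of_nonneg_right hinv hnn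
      _ = (n:ℝ) * δ ^ n * (1 - δ) := by ring
    have h4 := aux_ndelta hδ0.le hδ1.le n
    linarith
  have hreal : (1 - δ)⁻¹ ^ n * ((ν k)⁻¹ * ((1 - δ) * (2 * t) ^ (n - 1)))
      ≤ (2 / (δ * (1 - δ))) ^ n * t ^ (n - 1) := by
    have hpos : (0:ℝ) < δ ^ n * (1 - δ) ^ n := by positivity
    rw [← mul_le_mul_iff_of_pos_right hpos]
    have e1 : (2 / (δ * (1 - δ))) ^ n * t ^ (n - 1) * (δ ^ n * (1 - δ) ^ n)
        = 2 ^ n * t ^ (n - 1) := by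
      rw [div_pow, mul_pow]
      field_simp
    have e3 : (1 - δ)⁻¹ ^ n * (1 - δ) ^ n = 1 := by
      rw [← mul_pow, inv_mul_cancel₀ h1δ.ne', one_pow]
    have e2 : (1 - δ)⁻¹ ^ n * ((ν k)⁻¹ * ((1 - δ) * (2 * t) ^ (n - 1))) * (δ ^ n * (1 - δ) ^ n)
        = ((ν k)⁻¹ * (1 - δ) * δ ^ n) * (2 * t) ^ (n - 1) * ((1 - δ)⁻¹ ^ n * (1 - δ) ^ n) := by
      ring
    have e4 : (2:ℝ) * 2 ^ (n - 1) = 2 ^ n := by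
      have hn' : n - 1 + 1 = n := by omega
      have h5 : (2:ℝ) ^ n = 2 ^ (n - 1) * 2 := by conv_lhs => rw [← hn', pow_succ]
      rw [h5]; ring
    rw [e1, e2, e3, mul_one]
    calc (ν k)⁻¹ * (1 - δ) * δ ^ n * (2 * t) ^ (n - 1)
        ≤ 2 * (2 * t) ^ (n - 1) := mul_le_mul_of_nonneg_right hkeyr (by positivity)
      _ = 2 ^ n * t ^ (n - 1) := by rw [mul_pow, ← mul_assoc, e4]
  -- put everything together
  calc P {ω | linfty (fun i => piVec (fun j => α j ω) i - ν i)
          ≤ t * linfty (piVec fun j => α j ω)}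
      ≤ Measure.pi (fun _ : Fin n => μ0) A := step1
    _ = c ^ n * volume (A ∩ box) := by
        rw [hpi, Measure.smul_apply, smul_eq_mul, Measure.restrict_apply' hboxm]
    _ ≤ c ^ n * volume (T ⁻¹' B) := mul_le_mul_right (measure_mono hsub) _
    _ = c ^ n * (ENNReal.ofReal ((ν k)⁻¹)
          * (ENNReal.ofReal (1 - δ) * ENNReal.ofReal (2 * t) ^ (n - 1))) := by
        rw [hpre, hvolB, hTdet, abs_of_pos (inv_pos.mpr hνkpos)]
    _ = ENNReal.ofReal ((1 - δ)⁻¹ ^ n * ((ν k)⁻¹ * ((1 - δ) * (2 * t) ^ (n - 1)))) := by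
        rw [ENNReal.ofReal_mul (pow_nonneg (inv_nonneg.mpr h1δ.le) n),
          ENNReal.ofReal_mul (inv_nonneg.mpr hνkpos.le),
          ENNReal.ofReal_mul h1δ.le,
          ENNReal.ofReal_pow (inv_nonneg.mpr h1δ.le),
          ENNReal.ofReal_pow (by positivity : (0:ℝ) ≤ 2 * t), hc]
    _ ≤ ENNReal.ofReal ((2 / (δ * (1 - δ))) ^ n * t ^ (n - 1)) :=
        ENNReal.ofReal_le_ofReal hreal

/-- **Upper bound on the relative ℓ^∞ small ball probability**: if `α_1,…,α_n` are i.i.d.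
uniform on `[δ,1]` and `π(i) = α_i/(α_1+⋯+α_n)`, then for every `t > 0` and every `ν` in the
probability simplex, `P(‖π − ν‖_∞ ≤ t·‖π‖_∞) ≤ (2/(δ(1−δ)))^n · t^{n−1}`; consequently the
small ball probability `ℒ_∞(t)` obeys the same bound. -/
theorem small_ball_linfty_bound (n : ℕ) (hn : 2 ≤ n) (δ : ℝ) (hδ : δ ∈ Set.Ioo (0 : ℝ) 1)
    {Ω : Type} [MeasurableSpace Ω] (P : Measure Ω) [IsProbabilityMeasure P]
    (α : Fin n → Ω → ℝ) (hmeas : ∀ i, Measurable (α i))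
    (hindep : iIndepFun (m := fun _ => Real.measurableSpace) α P)
    (hunif : ∀ i, Measure.map (α i) P =
      ENNReal.ofReal ((1 - δ)⁻¹) • volume.restrict (Set.Icc δ 1)) :
    (∀ t > (0 : ℝ), ∀ ν ∈ stdSimplex ℝ (Fin n),
      P {ω | linfty (fun i => piVec (fun j => α j ω) i - ν i)
              ≤ t * linfty (piVec fun j => α j ω)}
        ≤ ENNReal.ofReal ((2 / (δ * (1 - δ))) ^ n * t ^ (n - 1))) ∧
    (∀ t > (0 : ℝ),
      (⨆ ν ∈ stdSimplex ℝ (Fin n),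
          P {ω | linfty (fun i => piVec (fun j => α j ω) i - ν i)
                  / linfty (piVec fun j => α j ω) ≤ t})
        ≤ ENNReal.ofReal ((2 / (δ * (1 - δ))) ^ n * t ^ (n - 1))) := by
  obtain ⟨hδ0, hδ1⟩ := hδ
  refine ⟨fun t ht ν hν => core_bound hn hδ0 hδ1 P α hmeas hindep hunif ht hν, ?_⟩
  intro t ht
  refine iSup₂_le fun ν hν => ?_
  set Bad : Set Ω := ⋃ i, α i ⁻¹' (Set.Icc δ 1)ᶜ with hBad
  have hBad0 : P Bad = 0 := by
    rw [hBad]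
    refine measure_iUnion_null fun i => ?_
    rw [← Measure.map_apply (hmeas i) measurableSet_Icc.compl, hunif i, Measure.smul_apply,
      smul_eq_mul, Measure.restrict_apply measurableSet_Icc.compl, Set.compl_inter_self,
      measure_empty, mul_zero]
  have hsub2 : {ω | linfty (fun i => piVec (fun j => α j ω) i - ν i)
      / linfty (piVec fun j => α j ω) ≤ t}
      ⊆ {ω | linfty (fun i => piVec (fun j => α j ω) i - ν i)
          ≤ t * linfty (piVec fun j => α j ω)} ∪ Bad := by
    intro ω hω
    by_cases hb : ω ∈ Bad
    · exact Or.inr hb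
    · left
      rw [hBad, Set.mem_iUnion] at hb
      push_neg at hb
      have hv : ∀ i, α i ω ∈ Set.Icc δ 1 := by
        intro i
        have := hb i
        simpa using this
      have hSpos : 0 < ∑ j, α j ω := by
        have h0 : (0:ℝ) < ∑ _j : Fin n, δ := by
          rw [Finset.sum_const, Finset.card_univ, Fintype.card_fin, nsmul_eq_mul]
          have : (0:ℝ) < (n:ℝ) := by exact_mod_cast (by omega : 0 < n)
          positivity
        exact lt_of_lt_of_le h0 (Finset.sum_le_sum fun j _ => (hv j).1)
      have hLpos : 0 < linfty (piVec fun j => α j ω) := by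
        haveI : NeZero n := ⟨by omega⟩
        have h1 : piVec (fun j => α j ω) 0 ≤ linfty (piVec fun j => α j ω) :=
          le_trans (le_abs_self _) (abs_le_linfty _ _)
        have h2 : 0 < piVec (fun j => α j ω) 0 :=
          div_pos (lt_of_lt_of_le hδ0 (hv 0).1) hSpos
        linarith
      exact (div_le_iff₀ hLpos).mp hω
  calc P {ω | linfty (fun i => piVec (fun j => α j ω) i - ν i)
          / linfty (piVec fun j => α j ω) ≤ t}
      ≤ P ({ω | linfty (fun i => piVec (fun j => α j ω) i - ν i)
          ≤ t * linfty (piVec fun j => α j ω)} ∪ Bad) := measure_mono hsub2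
    _ ≤ P {ω | linfty (fun i => piVec (fun j => α j ω) i - ν i)
          ≤ t * linfty (piVec fun j => α j ω)} + P Bad := measure_union_le _ _
    _ = P {ω | linfty (fun i => piVec (fun j => α j ω) i - ν i)
          ≤ t * linfty (piVec fun j => α j ω)} := by rw [hBad0, add_zero]
    _ ≤ ENNReal.ofReal ((2 / (δ * (1 - δ))) ^ n * t ^ (n - 1)) :=
        core_bound hn hδ0 hδ1 P α hmeas hindep hunif ht hν
end

section
/- Let n ≥ 2, δ ∈ (0,1), let α_1,…,α_n be i.i.d. uniform on [δ,1], and let π(i) = α_i/(α_1+⋯+α_n). Then for every t > 0 and every ν in the probability simplex S_n: P( ‖π − ν‖_1 ≤ t ) ≤ (1/(5√n)) · (2e/(1−δ))^n · t^{n−1}. Consequently, the small ball probability ℒ_1(t) = sup_{ν ∈ S_n} P(‖π − ν‖_1 ≤ t) satisfies ℒ_1(t) ≤ (1/(5√n))·(2e/(1−δ))^n·t^{n−1}. -/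
set_option maxHeartbeats 2000000


open MeasureTheory ProbabilityTheory

/-- ℓ^1 norm of a vector. -/
noncomputable def l1 {n : ℕ} (v : Fin n → ℝ) : ℝ := ∑ i, |v i|

/-- Stirling-type lower bound: `5 √n n^n ≤ 2 e^n n!`. -/
lemma stirling_aux (n : ℕ) (hn : 1 ≤ n) :
    5 * Real.sqrt n * (n : ℝ) ^ n ≤ 2 * Real.exp 1 ^ n * (n.factorial : ℝ) := by
  have hn0 : (0:ℝ) < n := by exact_mod_cast hn
  have hD : (0:ℝ) < Real.sqrt (2 * n) * ((n : ℝ) / Real.exp 1) ^ n := by positivity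
  have hs : Real.sqrt Real.pi ≤ Stirling.stirlingSeq n := by
    obtain ⟨k, rfl⟩ : ∃ k, n = k + 1 := ⟨n - 1, by omega⟩
    have ht : Filter.Tendsto (Stirling.stirlingSeq ∘ Nat.succ) Filter.atTop
        (nhds (Real.sqrt Real.pi)) :=
      Stirling.tendsto_stirlingSeq_sqrt_pi.comp (Filter.tendsto_add_atTop_nat 1)
    exact Stirling.stirlingSeq'_antitone.le_of_tendsto ht k
  have hfact : Real.sqrt Real.pi * (Real.sqrt (2 * n) * ((n : ℝ) / Real.exp 1) ^ n)
      ≤ (n.factorial : ℝ) := by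
    rw [Stirling.stirlingSeq] at hs
    exact (le_div_iff₀ hD).mp hs
  have h2 : Real.sqrt (2 * n) = Real.sqrt 2 * Real.sqrt n := Real.sqrt_mul (by norm_num) _
  have h5 : (5:ℝ) ≤ 2 * (Real.sqrt Real.pi * Real.sqrt 2) := by
    have hpi : Real.sqrt Real.pi = Real.sqrt Real.pi := rfl
    have h1 : Real.sqrt Real.pi * Real.sqrt 2 = Real.sqrt (Real.pi * 2) :=
      (Real.sqrt_mul Real.pi_nonneg 2).symm
    rw [h1]
    have : (25:ℝ)/4 ≤ Real.pi * 2 := by nlinarith [Real.pi_gt_d6]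
    have h2 : (5:ℝ)/2 ≤ Real.sqrt (Real.pi * 2) := by
      rw [show (5:ℝ)/2 = Real.sqrt ((5/2)^2) from (Real.sqrt_sq (by norm_num)).symm]
      exact Real.sqrt_le_sqrt (by nlinarith)
    linarith
  have hpow : ((n:ℝ) / Real.exp 1) ^ n * Real.exp 1 ^ n = (n:ℝ) ^ n := by
    rw [div_pow, div_mul_cancel₀]
    positivity
  have hnn : (0:ℝ) ≤ Real.sqrt n * (n:ℝ)^n := by positivity
  calc 5 * Real.sqrt n * (n : ℝ) ^ n
      ≤ (2 * (Real.sqrt Real.pi * Real.sqrt 2)) * (Real.sqrt n * (n:ℝ)^n) := by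
        rw [mul_assoc]
        exact mul_le_mul_of_nonneg_right h5 hnn
    _ = 2 * Real.exp 1 ^ n *
        (Real.sqrt Real.pi * (Real.sqrt (2*n) * ((n : ℝ) / Real.exp 1) ^ n)) := by
        rw [h2, ← hpow]; ring
    _ ≤ 2 * Real.exp 1 ^ n * (n.factorial : ℝ) := by
        refine mul_le_mul_of_nonneg_left hfact (by positivity)

/-- volume of the closed `ℓ^1`-ball in `Fin m → ℝ`. -/
lemma l1_ball_volume (m : ℕ) (hm : 1 ≤ m) (r : ℝ) :
    volume {w : Fin m → ℝ | ∑ j, |w j| ≤ r}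
      = ENNReal.ofReal r ^ m * ENNReal.ofReal (2 ^ m / (m.factorial : ℝ)) := by
  haveI : Nonempty (Fin m) := ⟨⟨0, hm⟩⟩
  have h := MeasureTheory.volume_sum_rpow_le (ι := Fin m) (p := 1) le_rfl r
  have hset : {x : Fin m → ℝ | (∑ i, |x i| ^ (1:ℝ)) ^ (1/(1:ℝ)) ≤ r}
      = {w : Fin m → ℝ | ∑ j, |w j| ≤ r} := by
    ext w; simp [Real.rpow_one]
  rw [hset] at h
  rw [h, Fintype.card_fin]
  congr 1
  have h1 : (1/(1:ℝ) + 1) = 2 := by norm_num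
  have h2 : ((m:ℝ) / 1 + 1) = (m:ℝ) + 1 := by norm_num
  rw [h1, h2, Real.Gamma_two, Real.Gamma_nat_eq_factorial, mul_one]

/-- **Upper bound on the ℓ^1 small ball probability**: if `α_1,…,α_n` are i.i.d. uniform on
`[δ,1]` and `π(i) = α_i/(α_1+⋯+α_n)`, then for every `t > 0` and every `ν` in the probability
simplex, `P(‖π − ν‖_1 ≤ t) ≤ (1/(5√n))·(2e/(1−δ))^n·t^{n−1}`; consequently the small ball
probability `ℒ_1(t)` obeys the same bound. -/
theorem small_ball_l1_bound (n : ℕ) (hn : 2 ≤ n) (δ : ℝ) (hδ : δ ∈ Set.Ioo (0 : ℝ) 1)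
    {Ω : Type} [MeasurableSpace Ω] (P : Measure Ω) [IsProbabilityMeasure P]
    (α : Fin n → Ω → ℝ) (hmeas : ∀ i, Measurable (α i))
    (hindep : iIndepFun α P)
    (hunif : ∀ i, Measure.map (α i) P =
      ENNReal.ofReal ((1 - δ)⁻¹) • volume.restrict (Set.Icc δ 1)) :
    (∀ t > (0 : ℝ), ∀ ν ∈ stdSimplex ℝ (Fin n),
      P {ω | l1 (fun i => piVec (fun j => α j ω) i - ν i) ≤ t}
        ≤ ENNReal.ofReal
            (1 / (5 * Real.sqrt n) * (2 * Real.exp 1 / (1 - δ)) ^ n * t ^ (n - 1))) ∧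
    (∀ t > (0 : ℝ),
      (⨆ ν ∈ stdSimplex ℝ (Fin n),
          P {ω | l1 (fun i => piVec (fun j => α j ω) i - ν i) ≤ t})
        ≤ ENNReal.ofReal
            (1 / (5 * Real.sqrt n) * (2 * Real.exp 1 / (1 - δ)) ^ n * t ^ (n - 1))) := by
  obtain ⟨hδ0, hδ1⟩ := hδ
  have h1δ : (0:ℝ) < 1 - δ := by linarith
  suffices key : ∀ t > (0 : ℝ), ∀ ν ∈ stdSimplex ℝ (Fin n),
      P {ω | l1 (fun i => piVec (fun j => α j ω) i - ν i) ≤ t}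
        ≤ ENNReal.ofReal
            (1 / (5 * Real.sqrt n) * (2 * Real.exp 1 / (1 - δ)) ^ n * t ^ (n - 1)) by
    exact ⟨key, fun t ht => iSup₂_le fun ν hν => key t ht ν hν⟩
  obtain ⟨m, rfl⟩ : ∃ m, n = m + 1 := ⟨n - 1, by omega⟩
  have hm : 1 ≤ m := by omega
  intro t ht ν hν
  obtain ⟨hν0, hν1⟩ := hν
  set N : ℝ := ((m + 1 : ℕ) : ℝ) with hNdef
  have hNpos : (0:ℝ) < N := by positivity
  have hN1 : N = (m:ℝ) + 1 := by push_cast [hNdef]; ring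
  -- the joint law of the α's
  haveI hprob : ∀ i : Fin (m+1), IsProbabilityMeasure (Measure.map (α i) P) :=
    fun i => Measure.isProbabilityMeasure_map (hmeas i).aemeasurable
  set X : Ω → (Fin (m+1) → ℝ) := fun ω i => α i ω with hXdef
  have hXmeas : Measurable X := measurable_pi_lambda _ fun i => hmeas i
  have hA1 : Measure.pi (fun i => Measure.map (α i) P) = Measure.map X P := by
    refine Measure.pi_eq fun s hs => ?_
    rw [Measure.map_apply hXmeas (MeasurableSet.univ_pi hs)]
    have hXp : X ⁻¹' Set.univ.pi s = ⋂ i ∈ Finset.univ, α i ⁻¹' s i := by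
      ext ω
      simp [X, Set.mem_univ_pi]
    rw [hXp, hindep.measure_inter_preimage_eq_mul Finset.univ (fun i _ => hs i)]
    exact Finset.prod_congr rfl fun i _ => (Measure.map_apply (hmeas i) (hs i)).symm
  set c : ENNReal := ENNReal.ofReal ((1 - δ)⁻¹) with hc
  set box : Set (Fin (m+1) → ℝ) := Set.univ.pi (fun _ => Set.Icc δ 1) with hboxdef
  have hboxmeas : MeasurableSet box := MeasurableSet.univ_pi fun _ => measurableSet_Icc
  have hB : Measure.pi (fun i => Measure.map (α i) P) = (c ^ (m+1)) • volume.restrict box := by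
    refine Measure.pi_eq fun s hs => ?_
    simp only [Measure.smul_apply, smul_eq_mul]
    rw [Measure.restrict_apply (MeasurableSet.univ_pi hs)]
    have h1 : Set.univ.pi s ∩ box = Set.univ.pi fun i => s i ∩ Set.Icc δ 1 :=
      (Set.pi_inter_distrib).symm
    rw [h1, volume_pi_pi]
    have h2 : ∀ i : Fin (m+1), Measure.map (α i) P (s i) = c * volume (s i ∩ Set.Icc δ 1) :=
      fun i => by
        rw [hunif i, Measure.smul_apply, smul_eq_mul, Measure.restrict_apply (hs i)]
    rw [Finset.prod_congr rfl fun i _ => h2 i, Finset.prod_mul_distrib, Finset.prod_const,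
      Finset.card_univ, Fintype.card_fin]
  have hX : Measure.map X P = (c ^ (m+1)) • volume.restrict box := hA1.symm.trans hB
  set A : Set (Fin (m+1) → ℝ) := {x | l1 (fun i => piVec x i - ν i) ≤ t} with hAdef
  have hAmeas : MeasurableSet A := by
    have h : Measurable fun x : Fin (m+1) → ℝ => l1 (fun i => piVec x i - ν i) := by
      unfold l1 piVec
      exact Finset.measurable_sum _ fun i _ =>
        (((measurable_pi_apply i).div
          (Finset.measurable_sum _ fun j _ => measurable_pi_apply j)).sub
            measurable_const).abs
    exact measurableSet_le h measurable_const
  have hPE : P {ω | l1 (fun i => piVec (fun j => α j ω) i - ν i) ≤ t}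
      = c ^ (m+1) * volume (A ∩ box) := by
    have hev : {ω | l1 (fun i => piVec (fun j => α j ω) i - ν i) ≤ t} = X ⁻¹' A := rfl
    rw [hev, ← Measure.map_apply hXmeas hAmeas, hX, Measure.smul_apply,
      Measure.restrict_apply hAmeas, smul_eq_mul]
  -- the geometric part
  set σ : Fin m → Fin (m+1) := fun j => (0 : Fin (m+1)).succAbove j with hσdef
  set Ψ : ℝ × (Fin m → ℝ) → ℝ × (Fin m → ℝ) :=
    fun p => ((∑ j, p.2 j) + p.1, (fun j => -(ν (σ j) * ((∑ j, p.2 j) + p.1))) + p.2) with hΨdef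
  have hmid : MeasurePreserving (fun q : (Fin m → ℝ) × ℝ => (q.1, (∑ j, q.1 j) + q.2))
      ((volume : Measure (Fin m → ℝ)).prod (volume : Measure ℝ))
      ((volume : Measure (Fin m → ℝ)).prod (volume : Measure ℝ)) :=
    (MeasurePreserving.id volume).skew_product (g := fun w a => (∑ j, w j) + a)
      ((Finset.measurable_sum Finset.univ fun j _ =>
        (measurable_pi_apply j).comp measurable_fst).add measurable_snd)
      (Filter.Eventually.of_forall fun (w : Fin m → ℝ) => map_add_left_eq_self volume (∑ j, w j))
  have hΨ1 : MeasurePreserving (fun p : ℝ × (Fin m → ℝ) => ((∑ j, p.2 j) + p.1, p.2))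
      ((volume : Measure ℝ).prod (volume : Measure (Fin m → ℝ)))
      ((volume : Measure ℝ).prod (volume : Measure (Fin m → ℝ))) := by
    have h := (Measure.measurePreserving_swap.comp hmid).comp Measure.measurePreserving_swap
    exact h
  have hΨ2 : MeasurePreserving
      (fun p : ℝ × (Fin m → ℝ) => (p.1, (fun j => -(ν (σ j) * p.1)) + p.2))
      ((volume : Measure ℝ).prod (volume : Measure (Fin m → ℝ)))
      ((volume : Measure ℝ).prod (volume : Measure (Fin m → ℝ))) :=
    (MeasurePreserving.id volume).skew_product
      (g := fun s w => (fun j => -(ν (σ j) * s)) + w)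
      ((measurable_pi_lambda _ fun j =>
        (measurable_fst.const_mul (ν (σ j))).neg).add measurable_snd)
      (Filter.Eventually.of_forall fun (s : ℝ) => map_add_left_eq_self volume (fun j => -(ν (σ j) * s)))
  have hΨ : MeasurePreserving Ψ
      ((volume : Measure ℝ).prod (volume : Measure (Fin m → ℝ)))
      ((volume : Measure ℝ).prod (volume : Measure (Fin m → ℝ))) := hΨ2.comp hΨ1
  have hΨ' : MeasurePreserving Ψ volume volume := by
    rw [Measure.volume_eq_prod]; exact hΨ
  set e := MeasurableEquiv.piFinSuccAbove (fun _ : Fin (m+1) => ℝ) 0 with hedef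
  have he : MeasurePreserving e volume volume := volume_preserving_piFinSuccAbove _ 0
  set F : (Fin (m+1) → ℝ) → ℝ × (Fin m → ℝ) := fun x => Ψ (e x) with hFdef
  have hF : MeasurePreserving F volume volume := hΨ'.comp he
  set C : Set (ℝ × (Fin m → ℝ)) :=
    (Prod.fst ⁻¹' Set.Icc (N*δ) N) ∩ {p | ∑ j, |p.2 j| ≤ t * p.1} with hCdef
  have hCmeas : MeasurableSet C :=
    (measurable_fst measurableSet_Icc).inter
      (measurableSet_le
        (Finset.measurable_sum _ fun j _ => ((measurable_pi_apply j).comp measurable_snd).abs)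
        (measurable_fst.const_mul t))
  have hsub : A ∩ box ⊆ F ⁻¹' C := by
    rintro x ⟨hxA, hxbox⟩
    have hxi : ∀ i, x i ∈ Set.Icc δ 1 := fun i => hxbox i (Set.mem_univ i)
    have hsN : (∑ i, x i) ≤ N := by
      calc (∑ i, x i) ≤ ∑ _i : Fin (m+1), (1:ℝ) := Finset.sum_le_sum fun i _ => (hxi i).2
        _ = N := by simp [hNdef]
    have hsNδ : N * δ ≤ ∑ i, x i := by
      calc N * δ = ∑ _i : Fin (m+1), δ := by
            simp [hNdef, Finset.sum_const, nsmul_eq_mul]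
        _ ≤ ∑ i, x i := Finset.sum_le_sum fun i _ => (hxi i).1
    have hspos : (0:ℝ) < ∑ i, x i := lt_of_lt_of_le (by positivity) hsNδ
    have hFx : F x = (∑ i, x i,
        fun j => x (σ j) - ν (σ j) * ∑ i, x i) := by
      have hsum : (∑ j, x (σ j)) + x 0 = ∑ i, x i := by
        rw [Fin.sum_univ_succAbove x 0]; ring
      show Ψ (x 0, fun j => x (σ j)) = _
      rw [hΨdef]
      simp only [hsum]
      refine Prod.ext rfl ?_
      funext j
      simp [hsum]
      ring
    rw [Set.mem_preimage, hFx]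
    constructor
    · exact ⟨hsNδ, hsN⟩
    · show (∑ j, |x (σ j) - ν (σ j) * ∑ i, x i|) ≤ t * ∑ i, x i
      have hle : (∑ j, |x (σ j) - ν (σ j) * ∑ i, x i|)
          ≤ ∑ i, |x i - ν i * ∑ i, x i| := by
        rw [Fin.sum_univ_succAbove (fun i => |x i - ν i * ∑ i, x i|) 0]
        exact le_add_of_nonneg_left (abs_nonneg _)
      have heq : (∑ i, |x i - ν i * ∑ i, x i|)
          = (∑ i, x i) * l1 (fun i => piVec x i - ν i) := by
        unfold l1 piVec
        rw [Finset.mul_sum]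
        refine Finset.sum_congr rfl fun i _ => ?_
        have hrw : x i - ν i * ∑ i, x i = (∑ i, x i) * (x i / (∑ i, x i) - ν i) := by
          field_simp
        rw [hrw, abs_mul, abs_of_pos hspos]
      calc (∑ j, |x (σ j) - ν (σ j) * ∑ i, x i|) ≤ ∑ i, |x i - ν i * ∑ i, x i| := hle
        _ = (∑ i, x i) * l1 (fun i => piVec x i - ν i) := heq
        _ ≤ (∑ i, x i) * t := mul_le_mul_of_nonneg_left hxA hspos.le
        _ = t * ∑ i, x i := mul_comm _ _
  have hvolsub : volume (A ∩ box) ≤ volume C := by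
    calc volume (A ∩ box) ≤ volume (F ⁻¹' C) := measure_mono hsub
      _ = volume C := hF.measure_preimage hCmeas.nullMeasurableSet
  -- computing the volume of C
  set K : ENNReal := ENNReal.ofReal (2 ^ m / (m.factorial : ℝ)) with hKdef
  have hCvol : volume C = ∫⁻ a in Set.Icc (N*δ) N,
      volume {w : Fin m → ℝ | ∑ j, |w j| ≤ t * a} := by
    rw [Measure.volume_eq_prod, Measure.prod_apply hCmeas,
      ← lintegral_indicator measurableSet_Icc]
    refine lintegral_congr fun a => ?_
    by_cases ha : a ∈ Set.Icc (N*δ) N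
    · rw [Set.indicator_of_mem ha]
      congr 1
      ext w
      simp [hCdef, ha]
    · rw [Set.indicator_of_notMem ha]
      have h0 : Prod.mk a ⁻¹' C = ∅ := by
        ext w; simp [hCdef, ha]
      rw [h0]; simp
  have hCvol2 : volume C = (∫⁻ a in Set.Icc (N*δ) N, ENNReal.ofReal (t*a) ^ m) * K := by
    rw [hCvol]
    have hfmeas : Measurable fun a : ℝ => ENNReal.ofReal (t*a) ^ m :=
      (ENNReal.measurable_ofReal.comp (measurable_const.mul measurable_id)).pow_const m
    rw [← lintegral_mul_const K hfmeas]
    refine setLIntegral_congr_fun measurableSet_Icc (fun a _ => ?_)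
    rw [l1_ball_volume m hm (t*a), hKdef]
  have hint : (∫⁻ a in Set.Icc (N*δ) N, ENNReal.ofReal (t*a) ^ m)
      ≤ ENNReal.ofReal (t ^ m * (N ^ (m+1) / ((m:ℝ)+1))) := by
    have h1 : (∫⁻ a in Set.Icc (N*δ) N, ENNReal.ofReal (t*a) ^ m)
        ≤ ∫⁻ a in Set.Icc 0 N, ENNReal.ofReal (t*a) ^ m :=
      lintegral_mono_set (Set.Icc_subset_Icc_left (by positivity))
    have h2 : (∫⁻ a in Set.Icc 0 N, ENNReal.ofReal (t*a) ^ m)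
        = ∫⁻ a in Set.Icc 0 N, ENNReal.ofReal ((t*a) ^ m) := by
      refine setLIntegral_congr_fun measurableSet_Icc
        (fun a ha => ?_)
      rw [ENNReal.ofReal_pow (mul_nonneg ht.le ha.1)]
    have hcont : Continuous fun a : ℝ => (t*a)^m := by continuity
    have h3 : (∫⁻ a in Set.Icc 0 N, ENNReal.ofReal ((t*a) ^ m))
        = ENNReal.ofReal (∫ a in Set.Icc 0 N, (t*a) ^ m) := by
      rw [ofReal_integral_eq_lintegral_ofReal (hcont.integrableOn_Icc)
        ((ae_restrict_mem measurableSet_Icc).mono fun a ha =>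
          pow_nonneg (mul_nonneg ht.le ha.1) m)]
    have h4 : (∫ a in Set.Icc 0 N, (t*a) ^ m) = t ^ m * (N ^ (m+1) / ((m:ℝ)+1)) := by
      simp_rw [mul_pow]
      rw [MeasureTheory.integral_const_mul, integral_Icc_eq_integral_Ioc,
        ← intervalIntegral.integral_of_le hNpos.le, integral_pow]
      rw [zero_pow (Nat.succ_ne_zero m)]
      ring
    rw [h2, h3, h4] at h1
    exact h1
  -- putting everything together
  rw [hPE]
  have hchain : c ^ (m+1) * volume (A ∩ box)
      ≤ c ^ (m+1) * (ENNReal.ofReal (t ^ m * (N ^ (m+1) / ((m:ℝ)+1))) * K) := by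
    refine mul_le_mul_right ?_ _
    calc volume (A ∩ box) ≤ volume C := hvolsub
      _ = (∫⁻ a in Set.Icc (N*δ) N, ENNReal.ofReal (t*a) ^ m) * K := hCvol2
      _ ≤ ENNReal.ofReal (t ^ m * (N ^ (m+1) / ((m:ℝ)+1))) * K :=
          mul_le_mul_left hint _
  refine hchain.trans ?_
  have hcpow : c ^ (m+1) = ENNReal.ofReal ((1-δ)⁻¹ ^ (m+1)) := by
    rw [hc, ENNReal.ofReal_pow (inv_nonneg.mpr h1δ.le)]
  rw [hcpow, hKdef, ← ENNReal.ofReal_mul (by positivity), ← ENNReal.ofReal_mul (by positivity)]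
  refine ENNReal.ofReal_le_ofReal ?_
  -- the real-number inequality
  have hkey := stirling_aux (m+1) (by omega)
  have hNn : ((m+1 : ℕ) : ℝ) = N := rfl
  rw [hNn] at hkey
  have hfacpos : (0:ℝ) < (m.factorial : ℝ) := by positivity
  have hsqpos : (0:ℝ) < Real.sqrt N := Real.sqrt_pos.mpr hNpos
  have hfactsucc : (((m+1).factorial : ℝ)) = ((m:ℝ)+1) * (m.factorial : ℝ) := by
    rw [Nat.factorial_succ]; push_cast; ring
  have h3 : 5 * Real.sqrt N * N ^ m ≤ 2 * Real.exp 1 ^ (m+1) * (m.factorial : ℝ) := by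
    have hmul : 5 * Real.sqrt N * N ^ m * ((m:ℝ)+1)
        ≤ 2 * Real.exp 1 ^ (m+1) * (m.factorial : ℝ) * ((m:ℝ)+1) := by
      calc 5 * Real.sqrt N * N ^ m * ((m:ℝ)+1)
          = 5 * Real.sqrt N * N ^ (m+1) := by rw [pow_succ, hN1]; ring
        _ ≤ 2 * Real.exp 1 ^ (m+1) * (((m+1).factorial : ℝ)) := hkey
        _ = 2 * Real.exp 1 ^ (m+1) * (m.factorial : ℝ) * ((m:ℝ)+1) := by
            rw [hfactsucc]; ring
    have hm1 : (0:ℝ) < (m:ℝ)+1 := by positivity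
    exact le_of_mul_le_mul_right hmul hm1
  have hNpow : N ^ (m+1) / ((m:ℝ)+1) = N ^ m := by
    rw [pow_succ, hN1, mul_div_assoc, div_self (by positivity), mul_one]
  have hexpand : (t ^ (m + 1 - 1) : ℝ) = t ^ m := by norm_num
  rw [hexpand, hNpow]
  have hmain : N ^ m * (2 ^ m / (m.factorial : ℝ))
      ≤ (2 * Real.exp 1) ^ (m+1) / (5 * Real.sqrt N) := by
    rw [show N ^ m * (2 ^ m / (m.factorial : ℝ)) = (N ^ m * 2 ^ m) / (m.factorial : ℝ) from by
      ring, div_le_div_iff₀ hfacpos (by positivity)]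
    calc N ^ m * 2 ^ m * (5 * Real.sqrt N) = (5 * Real.sqrt N * N ^ m) * 2 ^ m := by ring
      _ ≤ (2 * Real.exp 1 ^ (m+1) * (m.factorial : ℝ)) * 2 ^ m :=
          mul_le_mul_of_nonneg_right h3 (by positivity)
      _ = (2 * Real.exp 1) ^ (m+1) * (m.factorial : ℝ) := by
          rw [mul_pow]; ring
  calc (1-δ)⁻¹ ^ (m+1) * (t ^ m * N ^ m * (2 ^ m / (m.factorial : ℝ)))
      ≤ (1-δ)⁻¹ ^ (m+1) * (t ^ m * ((2 * Real.exp 1) ^ (m+1) / (5 * Real.sqrt N))) := by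
        rw [show t ^ m * N ^ m * (2 ^ m / (m.factorial : ℝ))
          = t ^ m * (N ^ m * (2 ^ m / (m.factorial : ℝ))) from by ring]
        refine mul_le_mul_of_nonneg_left (mul_le_mul_of_nonneg_left hmain (by positivity))
          (by positivity)
    _ = 1 / (5 * Real.sqrt N) * (2 * Real.exp 1 / (1 - δ)) ^ (m+1) * t ^ m := by
        rw [div_pow, inv_pow]
        field_simp
  -- done
end
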